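/- Let (X, μ) be a measure space and (f_n) a monotone non-decreasing sequence of functions f_n: X → [0, ∞] (i.e. 0 ≤ f_1(x) ≤ f_2(x) ≤ ... μ-a.e.), with pointwise limit f. Then lim_{n→∞} ∫* f_n dμ = ∫* f dμ, where ∫* denotes the upper integral. -/

import Mathlib

open scoped ENNReal NNReal
open MeasureTheory Metric Set Filter

/-- A Lorentzian pre-length space structure on a metric space `X`. -/
structure PLS (X : Type*) [MetricSpace X] where
  causal : X → X → Prop
  chron : X → X → Prop
  tau : X → X → ℝ≥0∞
  causal_refl : ∀ x, causal x x
  causal_trans : ∀ {x y z}, causal x y → causal y z → causal x z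
  chron_trans : ∀ {x y z}, chron x y → chron y z → chron x z
  chron_imp_causal : ∀ {x y}, chron x y → causal x y
  tau_lsc : LowerSemicontinuous fun p : X × X => tau p.1 p.2
  tau_revTriangle : ∀ {x y z}, causal x y → causal y z → tau x y + tau y z ≤ tau x z
  tau_eq_zero : ∀ {x y}, ¬ causal x y → tau x y = 0
  tau_pos_iff : ∀ {x y}, 0 < tau x y ↔ chron x y

namespace PLS

variable {X : Type*} [MetricSpace X]

/-- Causal diamond `J(p,q)`. -/
def J (L : PLS X) (p q : X) : Set X := {x | L.causal p x ∧ L.causal x q}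

/-- Chronological diamond `I(p,q)`. -/
def I (L : PLS X) (p q : X) : Set X := {x | L.chron p x ∧ L.chron x q}

/-- `p` and `q` are null related. -/
def NullRelated (L : PLS X) (p q : X) : Prop := L.causal p q ∧ ¬ L.chron p q

end PLS

/-- The normalizing constant `ω_s`. -/
noncomputable def omegaL (s : ℝ) : ℝ≥0∞ :=
  ENNReal.ofReal (Real.pi ^ ((s - 1) / 2) / (s * Real.Gamma ((s + 1) / 2) * (2 : ℝ) ^ (s - 1)))

namespace PLS

variable {X : Type*} [MetricSpace X]

/-- `ρ_s(J(p,q)) = ω_s τ(p,q)^s`. -/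
noncomputable def rho (L : PLS X) (s : ℝ) (p q : X) : ℝ≥0∞ := omegaL s * L.tau p q ^ s

/-- Members of the family `𝒥` encoded by `Option (X × X)`: `none` is the empty set,
`some (p,q)` the diamond `J(p,q)` with `p < q`. -/
def Jopt (L : PLS X) : Option (X × X) → Set X
  | none => ∅
  | some pq => L.J pq.1 pq.2

/-- Validity of a member of `𝒥`: nontrivial causally related vertices. -/
def memJJ (L : PLS X) : Option (X × X) → Prop
  | none => True
  | some pq => L.causal pq.1 pq.2 ∧ pq.1 ≠ pq.2

/-- `ρ_s` extended to members of `𝒥` (or of the chronological family). -/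
noncomputable def rhoOpt (L : PLS X) (s : ℝ) : Option (X × X) → ℝ≥0∞
  | none => 0
  | some pq => L.rho s pq.1 pq.2

/-- `δ`-approximation `𝒱^s_{d,δ}` of the Lorentzian Hausdorff measure. -/
noncomputable def Vd (L : PLS X) (s δ : ℝ) (A : Set X) : ℝ≥0∞ :=
  ⨅ (c : ℕ → Option (X × X)) (_ : (∀ i, L.memJJ (c i)) ∧
      (∀ i, Metric.diam (L.Jopt (c i)) < δ) ∧ A ⊆ ⋃ i, L.Jopt (c i)),
    ∑' i, L.rhoOpt s (c i)

/-- The `s`-dimensional Lorentzian Hausdorff measure (as a set function);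
since `Vd` is non-increasing in `δ`, the limit as `δ → 0` equals the supremum. -/
noncomputable def V (L : PLS X) (s : ℝ) (A : Set X) : ℝ≥0∞ :=
  ⨆ (δ : ℝ) (_ : 0 < δ), L.Vd s δ A

/-- Members of the chronological family, encoded by `Option (X × X)`. -/
def Iopt (L : PLS X) : Option (X × X) → Set X
  | none => ∅
  | some pq => L.I pq.1 pq.2

/-- Validity of a member of the chronological family. -/
def memII (L : PLS X) : Option (X × X) → Prop
  | none => True
  | some pq => L.chron pq.1 pq.2

/-- `δ`-approximation `ℳ^s_δ` of the strong Lorentzian Hausdorff measure,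
via coverings by chronological diamonds. -/
noncomputable def Md (L : PLS X) (s δ : ℝ) (A : Set X) : ℝ≥0∞ :=
  ⨅ (c : ℕ → Option (X × X)) (_ : (∀ i, L.memII (c i)) ∧
      (∀ i, Metric.diam (L.Iopt (c i)) ≤ δ) ∧ A ⊆ ⋃ i, L.Iopt (c i)),
    ∑' i, L.rhoOpt s (c i)

/-- Causal weighted `δ`-integral. -/
noncomputable def cwIntD (L : PLS X) (s δ : ℝ) (f : X → ℝ≥0∞) : ℝ≥0∞ :=
  ⨅ (a : ℕ → ℝ≥0∞) (c : ℕ → Option (X × X))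
    (_ : (∀ i, 0 < a i) ∧ (∀ i, L.memJJ (c i)) ∧
      (∀ i, Metric.diam (L.Jopt (c i)) ≤ δ) ∧
      ∀ x, f x ≤ ∑' i, a i * (L.Jopt (c i)).indicator 1 x),
    ∑' i, a i * L.rhoOpt s (c i)

/-- Causal weighted integral `∫• f dV^s_d`. -/
noncomputable def cwInt (L : PLS X) (s : ℝ) (f : X → ℝ≥0∞) : ℝ≥0∞ :=
  ⨆ (δ : ℝ) (_ : 0 < δ), L.cwIntD s δ f

end PLS

section Maps

variable {X Y : Type*} [MetricSpace X] [MetricSpace Y]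

/-- `U` is causality preserving. -/
def CausalityPreserving (LX : PLS X) (LY : PLS Y) (U : X → Y) : Prop :=
  ∀ p q, LX.causal p q → LY.causal (U p) (U q)

/-- `U` is timelike Lipschitz. -/
def TimelikeLipschitz (LX : PLS X) (LY : PLS Y) (U : X → Y) : Prop :=
  ∃ lam : ℝ, 0 < lam ∧
    ∀ p q, LX.causal p q → LY.tau (U p) (U q) ≤ ENNReal.ofReal lam * LX.tau p q

/-- The timelike Lipschitz constant `TLip U`. -/
noncomputable def TLip (LX : PLS X) (LY : PLS Y) (U : X → Y) : ℝ≥0∞ :=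
  ⨅ (lam : ℝ≥0∞)
    (_ : 0 < lam ∧ ∀ p q, LX.causal p q → LY.tau (U p) (U q) ≤ lam * LX.tau p q), lam

/-- `U` is uniformly `d`-controlling. -/
def UniformlyDControlling (LX : PLS X) (LY : PLS Y) (U : X → Y) : Prop :=
  CausalityPreserving LX LY U ∧
    ∃ η : ℝ → ℝ, (∀ s, 0 < s → 0 < η s) ∧
      Tendsto η (nhdsWithin 0 (Set.Ioi 0)) (nhds 0) ∧
      ∀ δ, 0 < δ → ∀ p q : X,
        Metric.diam (LX.J p q) < δ → Metric.diam (LY.J (U p) (U q)) < η δ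

/-- The summand `ρ_s(J(U a, U b)) ρ_t(J(a,b))` for `Φ`. -/
noncomputable def phiTerm (LX : PLS X) (LY : PLS Y) (U : X → Y) (s t : ℝ) :
    Option (X × X) → ℝ≥0∞
  | none => 0
  | some pq => LY.rho s (U pq.1) (U pq.2) * LX.rho t pq.1 pq.2

/-- `Φ^{s,t}_δ(U, E)`. -/
noncomputable def PhiD (LX : PLS X) (LY : PLS Y) (U : X → Y) (s t δ : ℝ) (E : Set X) : ℝ≥0∞ :=
  ⨅ (c : ℕ → Option (X × X)) (_ : (∀ i, LX.memJJ (c i)) ∧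
      (∀ i, Metric.diam (LX.Jopt (c i)) < δ) ∧ E ⊆ ⋃ i, LX.Jopt (c i)),
    ∑' i, phiTerm LX LY U s t (c i)

/-- `Φ^{s,t}(U, E) = lim_{δ→0} Φ^{s,t}_δ(U, E)`. -/
noncomputable def Phi (LX : PLS X) (LY : PLS Y) (U : X → Y) (s t : ℝ) (E : Set X) : ℝ≥0∞ :=
  ⨆ (δ : ℝ) (_ : 0 < δ), PhiD LX LY U s t δ E

end Maps

section Enlargement

variable {X : Type*} [MetricSpace X]

/-- `J(p',q')` is a causal enlargement of `J(p,q)` with constants `C₁, C₂`. -/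
def IsEnlargement (L : PLS X) (C1 C2 : ℝ) (p q p' q' : X) : Prop :=
  (∀ a b : X, L.causal a b → a ≠ b → (L.J a b ∩ L.J p q).Nonempty →
      Metric.diam (L.J a b) ≤ 2 * Metric.diam (L.J p q) → L.J a b ⊆ L.J p' q') ∧
  Metric.diam (L.J p' q') ≤ C1 * Metric.diam (L.J p q) ∧
  L.tau p' q' ≤ ENNReal.ofReal C2 * L.tau p q

/-- `Ux` is a causal enlargement neighborhood for constants `C₁, C₂`. -/
def CausalEnlargementNbhd (L : PLS X) (Ux : Set X) (C1 C2 : ℝ) : Prop :=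
  ∀ p q : X, L.chron p q → L.J p q ⊆ Ux → ∃ p' q', IsEnlargement L C1 C2 p q p' q'

/-- `X` satisfies the local causal enlargement property. -/
def LocalCausalEnlargement (L : PLS X) : Prop :=
  ∀ x : X, ∃ Ux ∈ nhds x, ∃ C1 C2 : ℝ, 1 ≤ C1 ∧ 1 ≤ C2 ∧ CausalEnlargementNbhd L Ux C1 C2

/-- `Ux` is a causal estimation neighborhood. -/
def CausalEstimationNbhd (L : PLS X) (Ux : Set X) : Prop :=
  (∀ p q : X, (L.I p q).Nonempty → L.I p q ⊆ Ux →
      Metric.diam (L.I p q) = Metric.diam (L.J p q)) ∧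
  (∀ p q : X, L.J p q ⊆ Ux → ∀ ε1 ε2 : ℝ, 1 < ε1 → 0 < ε2 →
      ∃ p' q', L.chron p' q' ∧ L.J p q ⊆ L.I p' q' ∧
        Metric.diam (L.I p' q') ≤ ε1 * Metric.diam (L.J p q) ∧
        L.tau p' q' ≤ L.tau p q + ENNReal.ofReal ε2)

/-- `X` satisfies the causal estimation property. -/
def CausalEstimation (L : PLS X) : Prop := ∀ x : X, ∃ Ux ∈ nhds x, CausalEstimationNbhd L Ux

end Enlargement

/-- The upper integral `∫* f dμ`. -/
noncomputable def upperInt {α : Type*} [MeasurableSpace α] (μ : Measure α) (f : α → ℝ≥0∞) : ℝ≥0∞ :=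
  ⨅ (φ : α → ℝ≥0∞) (_ : Measurable φ ∧ ∀ᵐ x ∂μ, f x ≤ φ x), ∫⁻ x, φ x ∂μ

theorem upperInt_le {α : Type*} [MeasurableSpace α] (μ : Measure α) {f : α → ℝ≥0∞}
    (φ : α → ℝ≥0∞) (hm : Measurable φ) (hae : ∀ᵐ x ∂μ, f x ≤ φ x) :
    upperInt μ f ≤ ∫⁻ x, φ x ∂μ :=
  iInf₂_le φ ⟨hm, hae⟩

theorem upperInt_mono_ae {α : Type*} [MeasurableSpace α] (μ : Measure α) {f g : α → ℝ≥0∞}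
    (h : ∀ᵐ x ∂μ, f x ≤ g x) : upperInt μ f ≤ upperInt μ g := by
  refine iInf_mono fun φ => iInf_mono' fun hφ => ⟨⟨hφ.1, ?_⟩, le_rfl⟩
  filter_upwards [h, hφ.2] with x h1 h2 using h1.trans h2

theorem exists_measurable_upperInt {α : Type*} [MeasurableSpace α] (μ : Measure α)
    (f : α → ℝ≥0∞) : ∃ φ : α → ℝ≥0∞, Measurable φ ∧ (∀ᵐ x ∂μ, f x ≤ φ x) ∧
      ∫⁻ x, φ x ∂μ = upperInt μ f := by
  by_cases htop : upperInt μ f = ∞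
  · refine ⟨fun _ => ∞, measurable_const,
      Filter.Eventually.of_forall fun x => le_top, ?_⟩
    have h1 : upperInt μ f ≤ ∫⁻ x, (fun _ : α => (∞ : ℝ≥0∞)) x ∂μ :=
      upperInt_le μ _ measurable_const (Filter.Eventually.of_forall fun x => le_top)
    rw [htop] at h1 ⊢
    exact top_le_iff.mp h1
  · have hlt : ∀ k : ℕ, ∃ φ : α → ℝ≥0∞,
        ∃ _ : Measurable φ ∧ ∀ᵐ x ∂μ, f x ≤ φ x,
        ∫⁻ x, φ x ∂μ < upperInt μ f + 1 / (k + 1) := by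
      intro k
      have h1 : upperInt μ f < upperInt μ f + 1 / (k + 1) :=
        ENNReal.lt_add_right htop (by simp)
      conv_lhs at h1 => rw [upperInt]
      rw [iInf_lt_iff] at h1
      obtain ⟨φ, hφ⟩ := h1
      rw [iInf_lt_iff] at hφ
      exact ⟨φ, hφ⟩
    choose φ hφ hlt' using hlt
    refine ⟨fun x => ⨅ k, φ k x, Measurable.iInf fun k => (hφ k).1, ?_, ?_⟩
    · have h1 := ae_all_iff.mpr fun k => (hφ k).2
      filter_upwards [h1] with x hx using le_iInf hx
    · refine le_antisymm ?_ (upperInt_le μ _ (Measurable.iInf fun k => (hφ k).1)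
        (by filter_upwards [ae_all_iff.mpr fun k => (hφ k).2] with x hx using le_iInf hx))
      refine ENNReal.le_of_forall_pos_le_add fun ε hε _ => ?_
      obtain ⟨k, hk⟩ := ENNReal.exists_inv_nat_lt
        (a := (ε : ℝ≥0∞)) (by exact_mod_cast hε.ne')
      calc ∫⁻ x, ⨅ k, φ k x ∂μ ≤ ∫⁻ x, φ k x ∂μ :=
            lintegral_mono fun x => iInf_le _ k
        _ ≤ upperInt μ f + 1 / (k + 1) := (hlt' k).le
        _ ≤ upperInt μ f + ε := by
            gcongr
            refine le_trans ?_ hk.le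
            rw [one_div]
            gcongr
            simp

theorem stmt1 {α : Type*} [MeasurableSpace α] (μ : Measure α) (f : ℕ → α → ℝ≥0∞)
    (hmono : ∀ᵐ x ∂μ, Monotone fun n => f n x) :
    Tendsto (fun n => upperInt μ (f n)) atTop
      (nhds (upperInt μ fun x => ⨆ n, f n x)) := by
  have hmono' : ∀ n m, n ≤ m → ∀ᵐ x ∂μ, f n x ≤ f m x := fun n m h =>
    hmono.mono fun x hx => hx h
  have hms : Monotone fun n => upperInt μ (f n) := fun n m h =>
    upperInt_mono_ae μ (hmono' n m h)
  choose ψ hψm hψae hψint using fun n => exists_measurable_upperInt μ (f n)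
  set g : ℕ → α → ℝ≥0∞ := fun n x => ⨅ m, ψ (n + m) x with hg
  have hgm : ∀ n, Measurable (g n) := fun n => Measurable.iInf fun m => hψm _
  have hgmono : ∀ n n', n ≤ n' → ∀ x, g n x ≤ g n' x := by
    intro n n' h x
    refine le_iInf fun m => ?_
    have he : ψ (n + ((n' - n) + m)) x = ψ (n' + m) x := by congr 1; omega
    exact (iInf_le (fun m => ψ (n + m) x) ((n' - n) + m)).trans he.le
  have hfg : ∀ n, ∀ᵐ x ∂μ, f n x ≤ g n x := by
    intro n
    have h1 : ∀ᵐ x ∂μ, ∀ m, f n x ≤ ψ (n + m) x := by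
      rw [ae_all_iff]; intro m
      filter_upwards [hmono' n (n + m) (Nat.le_add_right _ _), hψae (n + m)] with x h1 h2
        using h1.trans h2
    filter_upwards [h1] with x hx using le_iInf hx
  have hkey : upperInt μ (fun x => ⨆ n, f n x) = ⨆ n, upperInt μ (f n) := by
    apply le_antisymm
    · have hG : Measurable fun x => ⨆ n, g n x := Measurable.iSup hgm
      have hle : ∀ᵐ x ∂μ, (⨆ n, f n x) ≤ ⨆ n, g n x := by
        filter_upwards [ae_all_iff.mpr hfg] with x hx using iSup_mono hx
      calc upperInt μ (fun x => ⨆ n, f n x) ≤ ∫⁻ x, ⨆ n, g n x ∂μ :=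
            upperInt_le μ _ hG hle
        _ = ⨆ n, ∫⁻ x, g n x ∂μ := lintegral_iSup hgm fun n m h x => hgmono n m h x
        _ ≤ ⨆ n, upperInt μ (f n) := by
            refine iSup_mono fun n => ?_
            calc ∫⁻ x, g n x ∂μ ≤ ∫⁻ x, ψ n x ∂μ := lintegral_mono fun x => by
                  simpa using iInf_le (fun m => ψ (n + m) x) 0
              _ = upperInt μ (f n) := hψint n
    · exact iSup_le fun n => upperInt_mono_ae μ
        (Filter.Eventually.of_forall fun x => le_iSup (fun n => f n x) n)
  rw [hkey]
  exact tendsto_atTop_iSup hms
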